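/- For all probability measures μ, ν on ℝ^d with finite second moments, SW₂(μ,ν) ≤ (1/√d) W₂(μ,ν). -/

import Mathlib

open MeasureTheory Metric Filter Topology
open scoped ENNReal RealInnerProductSpace Pointwise

noncomputable section

abbrev Euc (d : ℕ) := EuclideanSpace ℝ (Fin d)

/-- The normalized uniform (rotation-invariant) probability measure on the unit sphere. -/
def uniformSphere (d : ℕ) : Measure (sphere (0 : Euc d) 1) :=
  (((volume : Measure (Euc d)).toSphere) Set.univ)⁻¹ • (volume : Measure (Euc d)).toSphere

/-- Couplings (transport plans) between two measures. -/
def Coupling {X : Type*} [MeasurableSpace X] (μ ν : Measure X) : Set (Measure (X × X)) :=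
  {γ | γ.map Prod.fst = μ ∧ γ.map Prod.snd = ν}

/-- Squared 2-Wasserstein distance. -/
def W2sq {X : Type*} [MeasurableSpace X] [Dist X] (μ ν : Measure X) : ℝ≥0∞ :=
  ⨅ (γ : Measure (X × X)) (_ : γ ∈ Coupling μ ν),
    ∫⁻ p, ENNReal.ofReal (dist p.1 p.2 ^ 2) ∂γ

/-- 2-Wasserstein distance. -/
def W2 {X : Type*} [MeasurableSpace X] [Dist X] (μ ν : Measure X) : ℝ≥0∞ :=
  (W2sq μ ν) ^ (1/2 : ℝ)

/-- Projection (pushforward) of a measure on ℝ^d onto the direction θ. -/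
def projMeas (d : ℕ) (μ : Measure (Euc d)) (θ : sphere (0 : Euc d) 1) : Measure ℝ :=
  μ.map (fun x => ⟪x, (θ : Euc d)⟫)

/-- Squared sliced 2-Wasserstein distance: sphere average of squared Wasserstein distances of
projections. -/
def SW2sq (d : ℕ) (μ ν : Measure (Euc d)) : ℝ≥0∞ :=
  ∫⁻ θ, W2sq (projMeas d μ θ) (projMeas d ν θ) ∂(uniformSphere d)

/-- Sliced 2-Wasserstein distance. -/
def SW2 (d : ℕ) (μ ν : Measure (Euc d)) : ℝ≥0∞ :=
  (SW2sq d μ ν) ^ (1/2 : ℝ)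

/-- Finite second moment. -/
def FiniteSecondMoment {X : Type*} [MeasurableSpace X] [Norm X] (μ : Measure X) : Prop :=
  ∫⁻ x, ENNReal.ofReal (‖x‖ ^ 2) ∂μ < ⊤

/-- Narrow (weak) convergence of a sequence of measures. -/
def NarrowTendsto {X : Type*} [MeasurableSpace X] [TopologicalSpace X]
    (μs : ℕ → Measure X) (μ : Measure X) : Prop :=
  ∀ f : BoundedContinuousFunction X ℝ,
    Tendsto (fun k => ∫ x, f x ∂(μs k)) atTop (𝓝 (∫ x, f x ∂μ))

end

noncomputable section AuxSW

open Set MeasureTheory.Measure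

variable {d : ℕ}

/-- Auxiliary integrand on `Euc d` for the polar-coordinates computation. -/
def PhiAux (d : ℕ) (v : Euc d) (x : Euc d) : ℝ≥0∞ :=
  ENNReal.ofReal (⟪v, ‖x‖⁻¹ • x⟫ ^ 2) * (Metric.ball (0 : Euc d) 1).indicator 1 x

lemma measurable_phiAux (v : Euc d) : Measurable (PhiAux d v) := by
  apply Measurable.mul
  · exact ENNReal.measurable_ofReal.comp
      ((Measurable.inner measurable_const (measurable_norm.inv.smul measurable_id)).pow_const 2)
  · exact measurable_one.indicator measurableSet_ball

lemma measurable_gAux (v : Euc d) :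
    Measurable fun θ : sphere (0 : Euc d) 1 => ENNReal.ofReal (⟪v, (θ : Euc d)⟫ ^ 2) :=
  (ENNReal.continuous_ofReal.comp
    ((continuous_const.inner continuous_subtype_val).pow 2)).measurable

/-- The constant `volumeIoiPow (d-1) (Iio 1)`. -/
def AAux (d : ℕ) : ℝ≥0∞ :=
  volumeIoiPow (Module.finrank ℝ (Euc d) - 1) (Iio ⟨1, mem_Ioi.2 one_pos⟩)

lemma AAux_ne_zero : AAux d ≠ 0 := by
  rw [AAux, volumeIoiPow_apply_Iio]
  simp only [ne_eq, ENNReal.ofReal_eq_zero, not_le]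
  positivity

lemma AAux_ne_top : AAux d ≠ ⊤ := by
  rw [AAux, volumeIoiPow_apply_Iio]; exact ENNReal.ofReal_ne_top

/-- Polar coordinate formula specialised to our integrand. -/
lemma toSphere_lintegral_eq (hd : 0 < d) (v : Euc d) :
    (∫⁻ θ, ENNReal.ofReal (⟪v, (θ : Euc d)⟫ ^ 2) ∂(volume : Measure (Euc d)).toSphere)
      * AAux d
      = ∫⁻ x in ({(0 : Euc d)}ᶜ : Set (Euc d)), PhiAux d v x ∂volume := by
  have : Nontrivial (Euc d) := by
    have : Nonempty (Fin d) := ⟨⟨0, hd⟩⟩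
    infer_instance
  set T := (volume : Measure (Euc d)).toSphere with hT
  set V := volumeIoiPow (Module.finrank ℝ (Euc d) - 1) with hV
  set g : sphere (0 : Euc d) 1 → ℝ≥0∞ := fun θ => ENNReal.ofReal (⟪v, (θ : Euc d)⟫ ^ 2) with hg
  set w : Ioi (0 : ℝ) → ℝ≥0∞ :=
    fun r => (Subtype.val ⁻¹' Iio (1 : ℝ)).indicator 1 r with hw
  have hwm : Measurable w :=
    measurable_one.indicator (measurable_subtype_coe measurableSet_Iio)
  have hVw : ∫⁻ r, w r ∂V = AAux d := by
    rw [hw, lintegral_indicator_one (measurable_subtype_coe measurableSet_Iio)]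
    congr 1
  have hprod : (∫⁻ θ, g θ ∂T) * AAux d = ∫⁻ p, g p.1 * w p.2 ∂(T.prod V) := by
    rw [lintegral_prod_mul (measurable_gAux v).aemeasurable hwm.aemeasurable, hVw]
  rw [hprod]
  have hmp := (volume : Measure (Euc d)).measurePreserving_homeomorphUnitSphereProd
  rw [← hmp.map_eq, lintegral_map
      (show Measurable fun p : sphere (0 : Euc d) 1 × Ioi (0:ℝ) => g p.1 * w p.2 from
        ((measurable_gAux v).comp measurable_fst).mul (hwm.comp measurable_snd))
      (homeomorphUnitSphereProd (Euc d)).measurable]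
  rw [← lintegral_subtype_comap (measurableSet_singleton (0 : Euc d)).compl (PhiAux d v)]
  refine lintegral_congr fun x => ?_
  have h1 : (((homeomorphUnitSphereProd (Euc d)) x).1 : Euc d)
      = ‖(x : Euc d)‖⁻¹ • (x : Euc d) := by simp
  have h2 : (((homeomorphUnitSphereProd (Euc d)) x).2 : ℝ) = ‖(x : Euc d)‖ := by simp
  have hiff : ((homeomorphUnitSphereProd (Euc d)) x).2 ∈ (Subtype.val ⁻¹' Iio (1:ℝ))
      ↔ (x : Euc d) ∈ Metric.ball (0 : Euc d) 1 := by
    simp [h2, mem_ball_zero_iff]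
  simp only [hg, hw, PhiAux, h1]
  congr 1
  by_cases hb : (x : Euc d) ∈ Metric.ball (0 : Euc d) 1
  · rw [indicator_of_mem (hiff.2 hb), indicator_of_mem hb]; rfl
  · rw [indicator_of_notMem (fun h => hb (hiff.1 h)), indicator_of_notMem hb]

/-- Invariance of the Euclidean-space integral under linear isometries. -/
lemma phiAux_lintegral_inv (e : Euc d ≃ₗᵢ[ℝ] Euc d) (v : Euc d) :
    ∫⁻ x in ({(0 : Euc d)}ᶜ : Set (Euc d)), PhiAux d (e v) x ∂volume
      = ∫⁻ x in ({(0 : Euc d)}ᶜ : Set (Euc d)), PhiAux d v x ∂volume := by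
  have hmap : Measure.map e (volume : Measure (Euc d)) = volume :=
    e.measurePreserving.map_eq
  conv_lhs => rw [← hmap,
    Measure.restrict_map e.continuous.measurable (measurableSet_singleton (0 : Euc d)).compl]
  rw [lintegral_map (measurable_phiAux (e v)) e.continuous.measurable]
  rw [show (⇑e ⁻¹' ({(0:Euc d)}ᶜ : Set (Euc d))) = ({(0:Euc d)}ᶜ : Set (Euc d)) from by
    ext y
    simp only [mem_preimage, mem_compl_iff, mem_singleton_iff]
    constructor
    · intro hy h; exact hy (by rw [h]; exact e.map_zero)
    · intro hy h; exact hy (by simpa using congrArg e.symm h)]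
  refine lintegral_congr fun y => ?_
  simp only [PhiAux]
  congr 1
  · congr 2
    rw [e.norm_map, ← e.map_smul, e.inner_map_map]
  · by_cases hy : y ∈ Metric.ball (0 : Euc d) 1
    · have hm : e y ∈ Metric.ball (0 : Euc d) 1 :=
        mem_ball_zero_iff.2 (by rw [e.norm_map]; exact mem_ball_zero_iff.1 hy)
      rw [indicator_of_mem hy, indicator_of_mem hm]; rfl
    · have hm : e y ∉ Metric.ball (0 : Euc d) 1 := fun h =>
        hy (mem_ball_zero_iff.2 (by rw [← e.norm_map]; exact mem_ball_zero_iff.1 h))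
      rw [indicator_of_notMem hy, indicator_of_notMem hm]

/-- `JT` is invariant under linear isometries. -/
lemma toSphere_lintegral_isometry_inv (hd : 0 < d) (e : Euc d ≃ₗᵢ[ℝ] Euc d) (v : Euc d) :
    (∫⁻ θ, ENNReal.ofReal (⟪e v, (θ : Euc d)⟫ ^ 2) ∂(volume : Measure (Euc d)).toSphere)
      = ∫⁻ θ, ENNReal.ofReal (⟪v, (θ : Euc d)⟫ ^ 2) ∂(volume : Measure (Euc d)).toSphere := by
  have h1 := toSphere_lintegral_eq hd (e v)
  have h2 := toSphere_lintegral_eq hd v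
  have h3 := phiAux_lintegral_inv e v
  have := h1.trans (h3.trans h2.symm)
  exact (ENNReal.mul_left_inj AAux_ne_zero AAux_ne_top).1 this

/-- Any two unit vectors give the same integral. -/
lemma toSphere_lintegral_unit_eq (hd : 0 < d) {u v : Euc d} (hu : ‖u‖ = 1) (hv : ‖v‖ = 1) :
    (∫⁻ θ, ENNReal.ofReal (⟪u, (θ : Euc d)⟫ ^ 2) ∂(volume : Measure (Euc d)).toSphere)
      = ∫⁻ θ, ENNReal.ofReal (⟪v, (θ : Euc d)⟫ ^ 2) ∂(volume : Measure (Euc d)).toSphere := by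
  set i₀ : Fin d := ⟨0, hd⟩
  have hcard : Module.finrank ℝ (Euc d) = Fintype.card (Fin d) := by
    simp [finrank_euclideanSpace_fin]
  have ortho : ∀ w : Euc d, ‖w‖ = 1 →
      Orthonormal ℝ (({i₀} : Set (Fin d)).restrict (fun _ : Fin d => w)) := by
    intro w hw
    refine ⟨fun _ => hw, fun i j hij => absurd (Subsingleton.elim i j) hij⟩
  obtain ⟨b, hb⟩ := (ortho u hu).exists_orthonormalBasis_extension_of_card_eq hcard
  obtain ⟨c, hc⟩ := (ortho v hv).exists_orthonormalBasis_extension_of_card_eq hcard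
  have hbu : b i₀ = u := hb i₀ rfl
  have hcv : c i₀ = v := hc i₀ rfl
  set e : Euc d ≃ₗᵢ[ℝ] Euc d := b.repr.trans c.repr.symm with he
  have heu : e u = v := by
    rw [he]
    simp only [LinearIsometryEquiv.trans_apply]
    rw [← hbu, b.repr_self, c.repr_symm_single, hcv]
  calc ∫⁻ θ, ENNReal.ofReal (⟪u, (θ : Euc d)⟫ ^ 2) ∂(volume : Measure (Euc d)).toSphere
      = ∫⁻ θ, ENNReal.ofReal (⟪e u, (θ : Euc d)⟫ ^ 2) ∂(volume : Measure (Euc d)).toSphere :=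
        (toSphere_lintegral_isometry_inv hd e u).symm
    _ = _ := by rw [heu]

lemma sum_sq_coord (θ : Euc d) : ∑ i : Fin d, θ i ^ 2 = ‖θ‖ ^ 2 := by
  rw [EuclideanSpace.norm_eq, Real.sq_sqrt]
  · refine Finset.sum_congr rfl fun i _ => ?_
    rw [Real.norm_eq_abs, sq_abs]
  · exact Finset.sum_nonneg fun i _ => by positivity

lemma toSphere_lintegral_sum (hd : 0 < d) :
    ∑ i : Fin d, (∫⁻ θ, ENNReal.ofReal (⟪(EuclideanSpace.single i (1:ℝ) : Euc d),
        (θ : Euc d)⟫ ^ 2) ∂(volume : Measure (Euc d)).toSphere)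
      = (volume : Measure (Euc d)).toSphere univ := by
  rw [← lintegral_finset_sum _ fun i _ => measurable_gAux _]
  have : ∀ θ : sphere (0 : Euc d) 1,
      ∑ i : Fin d, ENNReal.ofReal (⟪(EuclideanSpace.single i (1:ℝ) : Euc d),
        (θ : Euc d)⟫ ^ 2) = 1 := by
    intro θ
    have hinner : ∀ i : Fin d, ⟪(EuclideanSpace.single i (1:ℝ) : Euc d), (θ : Euc d)⟫
        = (θ : Euc d) i := by
      intro i
      rw [EuclideanSpace.inner_single_left]
      simp
    rw [← ENNReal.ofReal_sum_of_nonneg fun i _ => sq_nonneg _]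
    have : ∑ i : Fin d, ⟪(EuclideanSpace.single i (1:ℝ) : Euc d), (θ : Euc d)⟫ ^ 2 = 1 := by
      simp_rw [hinner]
      rw [sum_sq_coord (θ : Euc d)]
      rw [norm_eq_of_mem_sphere θ]
      norm_num
    rw [this, ENNReal.ofReal_one]
  rw [lintegral_congr this, lintegral_one]

lemma toSphere_univ_ne_zero (hd : 0 < d) :
    (volume : Measure (Euc d)).toSphere univ ≠ 0 := by
  have : Nontrivial (Euc d) := by
    have : Nonempty (Fin d) := ⟨⟨0, hd⟩⟩
    infer_instance
  rw [Measure.toSphere_apply_univ]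
  exact mul_ne_zero (by simp [finrank_euclideanSpace_fin, hd.ne'])
    (Metric.measure_ball_pos volume 0 one_pos).ne'

lemma toSphere_univ_ne_top :
    (volume : Measure (Euc d)).toSphere univ ≠ ⊤ :=
  (measure_lt_top _ _).ne

/-- The key spherical average identity. -/
lemma lintegral_inner_sq_uniformSphere (hd : 0 < d) (v : Euc d) :
    ∫⁻ θ, ENNReal.ofReal (⟪v, (θ : Euc d)⟫ ^ 2) ∂(uniformSphere d)
      = ENNReal.ofReal (‖v‖ ^ 2) / d := by
  set T := (volume : Measure (Euc d)).toSphere with hT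
  have hT0 : T univ ≠ 0 := toSphere_univ_ne_zero hd
  have hTtop : T univ ≠ ⊤ := toSphere_univ_ne_top
  have hd0 : (d : ℝ≥0∞) ≠ 0 := Nat.cast_ne_zero.2 hd.ne'
  have hdtop : (d : ℝ≥0∞) ≠ ⊤ := ENNReal.natCast_ne_top d
  -- value for unit vectors
  have hunit : ∀ u : Euc d, ‖u‖ = 1 →
      (∫⁻ θ, ENNReal.ofReal (⟪u, (θ : Euc d)⟫ ^ 2) ∂T) = T univ / d := by
    intro u hu
    have hsingle : ∀ i : Fin d, ‖(EuclideanSpace.single i (1:ℝ) : Euc d)‖ = 1 := by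
      intro i; rw [EuclideanSpace.norm_single]; norm_num
    have hsum := toSphere_lintegral_sum (d := d) hd
    have hsame : ∀ i : Fin d,
        (∫⁻ θ, ENNReal.ofReal (⟪(EuclideanSpace.single i (1:ℝ) : Euc d),
          (θ : Euc d)⟫ ^ 2) ∂T)
        = ∫⁻ θ, ENNReal.ofReal (⟪u, (θ : Euc d)⟫ ^ 2) ∂T := by
      intro i
      exact toSphere_lintegral_unit_eq hd (hsingle i) hu
    rw [Finset.sum_congr rfl fun i _ => hsame i, Finset.sum_const, Finset.card_univ,
      Fintype.card_fin, nsmul_eq_mul] at hsum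
    rw [ENNReal.eq_div_iff hd0 hdtop]
    exact hsum
  by_cases hv : v = 0
  · subst hv
    simp
  · set u : Euc d := ‖v‖⁻¹ • v with hu
    have hnu : ‖u‖ = 1 := norm_smul_inv_norm hv
    have hvu : ∀ θ : Euc d, ⟪v, θ⟫ ^ 2 = ‖v‖ ^ 2 * ⟪u, θ⟫ ^ 2 := by
      intro θ
      rw [hu, real_inner_smul_left]
      have hvne : ‖v‖ ≠ 0 := norm_ne_zero_iff.2 hv
      field_simp
    have hJ : ∀ (m : Measure (sphere (0 : Euc d) 1)),
        ∫⁻ θ, ENNReal.ofReal (⟪v, (θ : Euc d)⟫ ^ 2) ∂m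
        = ENNReal.ofReal (‖v‖ ^ 2) * ∫⁻ θ, ENNReal.ofReal (⟪u, (θ : Euc d)⟫ ^ 2) ∂m := by
      intro m
      rw [← lintegral_const_mul _ (measurable_gAux u)]
      refine lintegral_congr fun θ => ?_
      rw [← ENNReal.ofReal_mul (by positivity), hvu (θ : Euc d)]
    have key : ∀ a b c : ℝ≥0∞, a ≠ 0 → a ≠ ⊤ → a⁻¹ * (b * (c⁻¹ * a)) = c⁻¹ * b := by
      intro a b c ha hatop
      calc a⁻¹ * (b * (c⁻¹ * a)) = c⁻¹ * b * (a⁻¹ * a) := by ring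
        _ = c⁻¹ * b := by rw [ENNReal.inv_mul_cancel ha hatop, mul_one]
    rw [uniformSphere, lintegral_smul_measure, hJ, hunit u hnu]
    rw [ENNReal.div_eq_inv_mul, ENNReal.div_eq_inv_mul]
    exact key _ _ _ hT0 hTtop

lemma uniformSphere_isProbability (hd : 0 < d) :
    IsProbabilityMeasure (uniformSphere d) := by
  constructor
  rw [uniformSphere, Measure.smul_apply, smul_eq_mul]
  exact ENNReal.inv_mul_cancel (toSphere_univ_ne_zero hd) toSphere_univ_ne_top

end AuxSW

/-- SW₂(μ,ν) ≤ (1/√d) W₂(μ,ν). -/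
theorem SW2_le_W2_div_sqrt (d : ℕ) (hd : 0 < d) (μ ν : Measure (Euc d))
    [IsProbabilityMeasure μ] [IsProbabilityMeasure ν]
    (hμ2 : FiniteSecondMoment μ) (hν2 : FiniteSecondMoment ν) :
    SW2 d μ ν ≤ W2 μ ν / ENNReal.ofReal (Real.sqrt d) := by
  classical
  have hd0 : (d : ℝ≥0∞) ≠ 0 := Nat.cast_ne_zero.2 hd.ne'
  have hdtop : (d : ℝ≥0∞) ≠ ⊤ := ENNReal.natCast_ne_top d
  haveI hσ : IsProbabilityMeasure (uniformSphere d) := uniformSphere_isProbability hd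
  have key : SW2sq d μ ν ≤ W2sq μ ν / (d : ℝ≥0∞) := by
    rw [ENNReal.le_div_iff_mul_le (Or.inl hd0) (Or.inl hdtop), W2sq]
    refine le_iInf fun γ => le_iInf fun hγ => ?_
    haveI hγfin : IsProbabilityMeasure γ := by
      constructor
      have h1 : γ.map Prod.fst Set.univ = γ Set.univ := by
        rw [Measure.map_apply measurable_fst MeasurableSet.univ, Set.preimage_univ]
      rw [← h1, hγ.1]; exact measure_univ
    have step1 : ∀ θ : sphere (0 : Euc d) 1,
        W2sq (projMeas d μ θ) (projMeas d ν θ)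
          ≤ ∫⁻ p : Euc d × Euc d,
              ENNReal.ofReal (⟪p.1 - p.2, (θ : Euc d)⟫ ^ 2) ∂γ := by
      intro θ
      set f : Euc d × Euc d → ℝ × ℝ :=
        fun p => (⟪p.1, (θ : Euc d)⟫, ⟪p.2, (θ : Euc d)⟫) with hf
      have hinnm : Measurable fun x : Euc d => ⟪x, (θ : Euc d)⟫ :=
        (Continuous.inner continuous_id continuous_const).measurable
      have hfm : Measurable f :=
        ((continuous_fst.inner continuous_const).prodMk
          (continuous_snd.inner continuous_const)).measurable
      have hcoup : γ.map f ∈ Coupling (projMeas d μ θ) (projMeas d ν θ) := by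
        constructor
        · rw [Measure.map_map measurable_fst hfm,
            show Prod.fst ∘ f = (fun x : Euc d => ⟪x, (θ : Euc d)⟫) ∘ Prod.fst from rfl,
            ← Measure.map_map hinnm measurable_fst, hγ.1]
          rfl
        · rw [Measure.map_map measurable_snd hfm,
            show Prod.snd ∘ f = (fun x : Euc d => ⟪x, (θ : Euc d)⟫) ∘ Prod.snd from rfl,
            ← Measure.map_map hinnm measurable_snd, hγ.2]
          rfl
      have hdm : Measurable fun q : ℝ × ℝ => ENNReal.ofReal (dist q.1 q.2 ^ 2) :=
        ENNReal.measurable_ofReal.comp ((measurable_fst.dist measurable_snd).pow_const 2)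
      calc W2sq (projMeas d μ θ) (projMeas d ν θ)
          ≤ ∫⁻ q, ENNReal.ofReal (dist q.1 q.2 ^ 2) ∂(γ.map f) :=
            iInf_le_of_le (γ.map f) (iInf_le _ hcoup)
        _ = ∫⁻ p, ENNReal.ofReal
              (dist (⟪p.1, (θ : Euc d)⟫ : ℝ) ⟪p.2, (θ : Euc d)⟫ ^ 2) ∂γ :=
            lintegral_map hdm hfm
        _ = ∫⁻ p, ENNReal.ofReal (⟪p.1 - p.2, (θ : Euc d)⟫ ^ 2) ∂γ :=
            lintegral_congr fun p => by rw [Real.dist_eq, sq_abs, inner_sub_left]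
    have hswapm : AEMeasurable
        (Function.uncurry fun (θ : sphere (0 : Euc d) 1) (p : Euc d × Euc d) =>
          ENNReal.ofReal (⟪p.1 - p.2, (θ : Euc d)⟫ ^ 2))
        ((uniformSphere d).prod γ) := by
      have hfc : Continuous fun z : sphere (0 : Euc d) 1 × (Euc d × Euc d) =>
          ⟪z.2.1 - z.2.2, ((z.1 : Euc d))⟫ :=
        Continuous.inner (continuous_snd.fst.sub continuous_snd.snd)
          (continuous_subtype_val.comp continuous_fst)
      exact (ENNReal.continuous_ofReal.comp (hfc.pow 2)).measurable.aemeasurable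
    have hbound : SW2sq d μ ν
        ≤ (∫⁻ p, ENNReal.ofReal (dist p.1 p.2 ^ 2) ∂γ) * (d : ℝ≥0∞)⁻¹ := by
      calc SW2sq d μ ν
          ≤ ∫⁻ θ, ∫⁻ p, ENNReal.ofReal (⟪p.1 - p.2, (θ : Euc d)⟫ ^ 2) ∂γ
              ∂(uniformSphere d) := lintegral_mono step1
        _ = ∫⁻ p, ∫⁻ θ, ENNReal.ofReal (⟪p.1 - p.2, (θ : Euc d)⟫ ^ 2)
              ∂(uniformSphere d) ∂γ := lintegral_lintegral_swap hswapm
        _ = ∫⁻ p, ENNReal.ofReal (‖p.1 - p.2‖ ^ 2) / d ∂γ :=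
            lintegral_congr fun p => lintegral_inner_sq_uniformSphere hd _
        _ = (∫⁻ p, ENNReal.ofReal (dist p.1 p.2 ^ 2) ∂γ) * (d : ℝ≥0∞)⁻¹ := by
            rw [← lintegral_mul_const' ((d : ℝ≥0∞)⁻¹) _ (ENNReal.inv_ne_top.2 hd0)]
            exact lintegral_congr fun p => by
              rw [dist_eq_norm, ENNReal.div_eq_inv_mul, mul_comm]
    calc SW2sq d μ ν * d
        ≤ (∫⁻ p, ENNReal.ofReal (dist p.1 p.2 ^ 2) ∂γ) * (d : ℝ≥0∞)⁻¹ * d :=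
          mul_le_mul_left hbound _
      _ = ∫⁻ p, ENNReal.ofReal (dist p.1 p.2 ^ 2) ∂γ := by
          rw [mul_assoc, ENNReal.inv_mul_cancel hd0 hdtop, mul_one]
  have hpow : ((d : ℝ≥0∞)) ^ (1/2 : ℝ) = ENNReal.ofReal (Real.sqrt d) := by
    rw [← ENNReal.ofReal_natCast,
      ENNReal.ofReal_rpow_of_nonneg (Nat.cast_nonneg d) (by norm_num), Real.sqrt_eq_rpow]
  rw [SW2, W2]
  calc (SW2sq d μ ν) ^ (1/2 : ℝ)
      ≤ (W2sq μ ν / (d : ℝ≥0∞)) ^ (1/2 : ℝ) := ENNReal.rpow_le_rpow key (by norm_num)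
    _ = (W2sq μ ν) ^ (1/2 : ℝ) / ((d : ℝ≥0∞)) ^ (1/2 : ℝ) :=
        ENNReal.div_rpow_of_nonneg _ _ (by norm_num)
    _ = (W2sq μ ν) ^ (1/2 : ℝ) / ENNReal.ofReal (Real.sqrt d) := by rw [hpow]
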